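/- Consider the π/6-twisted Schönhardt polyhedron with vertices A, B, C (top unit equilateral triangle) and D, E, F (bottom unit equilateral triangle rotated so the total twist angle is π/6), with edges AE, AF, BD, BF, CD, CE, AB, BC, CA, DE, EF, FD. There exists an assignment q of vectors to the six vertices with q(D) = q(E) = q(F) = 0 and q(A), q(B), q(C) ≠ 0 such that ⟨v_i − v_j, q(v_i) − q(v_j)⟩ = 0 for every edge v_i v_j, and q is not the restriction of any Killing field of ℝ³. Hence the π/6-twisted Schönhardt polyhedron is infinitesimally flexible. -/
import Mathlib


open Real Matrix

set_option maxHeartbeats 1000000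

/-- The π/6-twisted Schönhardt polyhedron is infinitesimally flexible: keeping the bottom
triangle `DEF` fixed (`q(D) = q(E) = q(F) = 0`), there are nonzero vectors at `A, B, C`
giving an infinitesimal isometric deformation on all edges which is not the restriction
of any Killing field `p ↦ M p + b` with `M` skew-symmetric. -/
theorem schonhardt_infinitesimally_flexible
    (A B C D E F : Fin 3 → ℝ)
    (hA : A = ![1, 0, 1])
    (hB : B = ![Real.cos (2 * π / 3), Real.sin (2 * π / 3), 1])
    (hC : C = ![Real.cos (4 * π / 3), Real.sin (4 * π / 3), 1])
    (hD : D = ![0, -1, -1])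
    (hE : E = ![Real.cos (π / 6), Real.sin (π / 6), -1])
    (hF : F = ![Real.cos (5 * π / 6), Real.sin (5 * π / 6), -1]) :
    ∃ qA qB qC : Fin 3 → ℝ,
      qA ≠ 0 ∧ qB ≠ 0 ∧ qC ≠ 0 ∧
      (A - E) ⬝ᵥ qA = 0 ∧ (A - F) ⬝ᵥ qA = 0 ∧
      (B - D) ⬝ᵥ qB = 0 ∧ (B - F) ⬝ᵥ qB = 0 ∧
      (C - D) ⬝ᵥ qC = 0 ∧ (C - E) ⬝ᵥ qC = 0 ∧
      (A - B) ⬝ᵥ (qA - qB) = 0 ∧ (B - C) ⬝ᵥ (qB - qC) = 0 ∧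
      (C - A) ⬝ᵥ (qC - qA) = 0 ∧
      ¬∃ (M : Matrix (Fin 3) (Fin 3) ℝ) (b : Fin 3 → ℝ), Mᵀ = -M ∧
          qA = M.mulVec A + b ∧ qB = M.mulVec B + b ∧ qC = M.mulVec C + b ∧
          (0 : Fin 3 → ℝ) = M.mulVec D + b ∧ (0 : Fin 3 → ℝ) = M.mulVec E + b ∧
          (0 : Fin 3 → ℝ) = M.mulVec F + b := by
  set s : ℝ := Real.sqrt 3 with hs_def
  have hs2 : s ^ 2 = 3 := Real.sq_sqrt (by norm_num)
  have hspos : 0 < s := Real.sqrt_pos.mpr (by norm_num)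
  have hcos23 : Real.cos (2 * π / 3) = -(1/2) := by
    have h : 2 * π / 3 = π - π / 3 := by ring
    rw [h, Real.cos_pi_sub, Real.cos_pi_div_three]
  have hsin23 : Real.sin (2 * π / 3) = s / 2 := by
    have h : 2 * π / 3 = π - π / 3 := by ring
    rw [h, Real.sin_pi_sub, Real.sin_pi_div_three]
  have hcos43 : Real.cos (4 * π / 3) = -(1/2) := by
    have h : 4 * π / 3 = π + π / 3 := by ring
    rw [h, Real.cos_add, Real.cos_pi, Real.sin_pi, Real.cos_pi_div_three]; ring
  have hsin43 : Real.sin (4 * π / 3) = -(s / 2) := by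
    have h : 4 * π / 3 = π + π / 3 := by ring
    rw [h, Real.sin_add, Real.cos_pi, Real.sin_pi, Real.sin_pi_div_three]; ring
  have hcos6 : Real.cos (π / 6) = s / 2 := Real.cos_pi_div_six
  have hsin6 : Real.sin (π / 6) = 1 / 2 := Real.sin_pi_div_six
  have hcos56 : Real.cos (5 * π / 6) = -(s / 2) := by
    have h : 5 * π / 6 = π - π / 6 := by ring
    rw [h, Real.cos_pi_sub, Real.cos_pi_div_six]
  have hsin56 : Real.sin (5 * π / 6) = 1 / 2 := by
    have h : 5 * π / 6 = π - π / 6 := by ring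
    rw [h, Real.sin_pi_sub, Real.sin_pi_div_six]
  subst hA hB hC hD hE hF
  rw [hcos23, hsin23, hcos43, hsin43, hcos6, hsin6, hcos56, hsin56]
  refine ⟨![0, 4, 1], ![-(2*s), -2, 1], ![2*s, -2, 1], ?_, ?_, ?_, ?_, ?_, ?_, ?_, ?_, ?_,
    ?_, ?_, ?_, ?_⟩
  · intro h; have := congrFun h 2; simp at this
  · intro h; have := congrFun h 2; simp at this
  · intro h; have := congrFun h 2; simp at this
  · simp only [dotProduct, Fin.sum_univ_three, Pi.sub_apply, Matrix.cons_val_zero, Matrix.cons_val_one, Matrix.head_cons, Matrix.cons_val_two, Matrix.tail_cons]; nlinarith [hs2]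
  · simp only [dotProduct, Fin.sum_univ_three, Pi.sub_apply, Matrix.cons_val_zero, Matrix.cons_val_one, Matrix.head_cons, Matrix.cons_val_two, Matrix.tail_cons]; nlinarith [hs2]
  · simp only [dotProduct, Fin.sum_univ_three, Pi.sub_apply, Matrix.cons_val_zero, Matrix.cons_val_one, Matrix.head_cons, Matrix.cons_val_two, Matrix.tail_cons]; nlinarith [hs2]
  · simp only [dotProduct, Fin.sum_univ_three, Pi.sub_apply, Matrix.cons_val_zero, Matrix.cons_val_one, Matrix.head_cons, Matrix.cons_val_two, Matrix.tail_cons]; nlinarith [hs2]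
  · simp only [dotProduct, Fin.sum_univ_three, Pi.sub_apply, Matrix.cons_val_zero, Matrix.cons_val_one, Matrix.head_cons, Matrix.cons_val_two, Matrix.tail_cons]; nlinarith [hs2]
  · simp only [dotProduct, Fin.sum_univ_three, Pi.sub_apply, Matrix.cons_val_zero, Matrix.cons_val_one, Matrix.head_cons, Matrix.cons_val_two, Matrix.tail_cons]; nlinarith [hs2]
  · simp only [dotProduct, Fin.sum_univ_three, Pi.sub_apply, Matrix.cons_val_zero, Matrix.cons_val_one, Matrix.head_cons, Matrix.cons_val_two, Matrix.tail_cons]; nlinarith [hs2]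
  · simp only [dotProduct, Fin.sum_univ_three, Pi.sub_apply, Matrix.cons_val_zero, Matrix.cons_val_one, Matrix.head_cons, Matrix.cons_val_two, Matrix.tail_cons]; nlinarith [hs2]
  · simp only [dotProduct, Fin.sum_univ_three, Pi.sub_apply, Matrix.cons_val_zero, Matrix.cons_val_one, Matrix.head_cons, Matrix.cons_val_two, Matrix.tail_cons]; nlinarith [hs2]
  · rintro ⟨M, b, hskew, h1, -, -, hDq, hEq, hFq⟩
    have sk : ∀ i j, M j i = -M i j := by
      intro i j
      have h := congrFun (congrFun hskew i) j
      simpa [Matrix.transpose_apply, Matrix.neg_apply] using h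
    have hD0 := congrFun hDq 0
    have hD1 := congrFun hDq 1
    have hD2 := congrFun hDq 2
    have hE0 := congrFun hEq 0
    have hE1 := congrFun hEq 1
    have hE2 := congrFun hEq 2
    have hF0 := congrFun hFq 0
    have hF1 := congrFun hFq 1
    have hF2 := congrFun hFq 2
    have hq2 := congrFun h1 2
    simp only [Matrix.mulVec, dotProduct, Fin.sum_univ_three, Pi.add_apply, Pi.zero_apply, Matrix.cons_val_zero, Matrix.cons_val_one, Matrix.head_cons, Matrix.cons_val_two, Matrix.tail_cons] at hD0 hD1 hD2 hE0 hE1 hE2 hF0 hF1 hF2 hq2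
    have sk00 := sk 0 0
    have sk11 := sk 1 1
    have sk22 := sk 2 2
    have sk01 := sk 0 1
    have sk02 := sk 0 2
    have sk12 := sk 1 2
    -- From E and F equations: s * M i 0 = 0, hence M i 0 = 0
    have hM00 : M 0 0 = 0 := by linarith
    have hM11 : M 1 1 = 0 := by linarith
    have hM22 : M 2 2 = 0 := by linarith
    have hM10 : M 1 0 = 0 := by
      have h : s * M 1 0 = 0 := by linear_combination hF1 - hE1
      rcases mul_eq_zero.mp h with h | h
      · exact absurd h (ne_of_gt hspos)
      · exact h
    have hM20 : M 2 0 = 0 := by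
      have h : s * M 2 0 = 0 := by linear_combination hF2 - hE2
      rcases mul_eq_zero.mp h with h | h
      · exact absurd h (ne_of_gt hspos)
      · exact h
    have hM01 : M 0 1 = 0 := by rw [sk01] at hM10; linarith
    have hM02 : M 0 2 = 0 := by rw [sk02] at hM20; linarith
    rw [hM10] at hE1
    rw [hM20] at hE2
    have hM21 : M 2 1 = 0 := by linarith [hD2, hE2, hM22]
    have hM12 : M 1 2 = 0 := by rw [sk12] at hM21; linarith
    have hb2 : b 2 = 0 := by linarith [hD2, hM21, hM22]
    linarith [hq2, hM20, hM21, hM22, hb2]
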